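/- arXiv:1505.05114 — 3 statements merged into one kernel-verified Lean document; each statement's English description precedes it below -/
import Mathlib

section
/- Let x, z ∈ ℝⁿ with h := z - x satisfying ‖h‖ ≤ δ‖z‖ for some δ < 1/2. Then √(2-4δ)·‖h‖·‖z‖ ≤ ‖x xᵀ - z zᵀ‖_F ≤ (2+δ)·‖h‖·‖z‖. -/
/-- Frobenius-norm bounds on `x xᵀ - z zᵀ` in terms of `‖h‖‖z‖` where `h = z - x`. -/
theorem stmt_0 (n : ℕ) (x z : EuclideanSpace ℝ (Fin n)) (δ : ℝ) (hδ : δ < 1/2)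
    (hhz : ‖z - x‖ ≤ δ * ‖z‖) :
    Real.sqrt (2 - 4 * δ) * ‖z - x‖ * ‖z‖ ≤
      Real.sqrt (∑ i, ∑ j, (x i * x j - z i * z j) ^ 2) ∧
    Real.sqrt (∑ i, ∑ j, (x i * x j - z i * z j) ^ 2) ≤ (2 + δ) * ‖z - x‖ * ‖z‖ := by
  have hnorm : ∀ w : EuclideanSpace ℝ (Fin n), ‖w‖^2 = ∑ i, w i ^ 2 := by
    intro w
    rw [EuclideanSpace.norm_eq, Real.sq_sqrt (by positivity)]
    simp [sq_abs]
  set a := ‖x‖ with ha'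
  set b := ‖z‖ with hb'
  set r := ‖z - x‖ with hr'
  set s : ℝ := inner ℝ x z with hs'
  have hs : s = ∑ i, x i * z i := by
    simp [hs', PiLp.inner_apply, RCLike.inner_apply, mul_comm]
  have hsum : ∑ i, ∑ j, (x i * x j - z i * z j) ^ 2 = a^4 + b^4 - 2 * s^2 := by
    have h3 : ∑ i, ∑ j, (x i * x j - z i * z j) ^ 2
        = (∑ i, x i^2) * (∑ j, x j^2) - 2 * ((∑ i, x i * z i) * (∑ j, x j * z j))
          + (∑ i, z i^2) * (∑ j, z j^2) := by
      rw [Finset.sum_mul_sum, Finset.sum_mul_sum, Finset.sum_mul_sum, Finset.mul_sum,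
        ← Finset.sum_sub_distrib, ← Finset.sum_add_distrib]
      refine Finset.sum_congr rfl fun i _ => ?_
      rw [Finset.mul_sum, ← Finset.sum_sub_distrib, ← Finset.sum_add_distrib]
      refine Finset.sum_congr rfl fun j _ => ?_
      ring
    rw [h3, ← hnorm x, ← hnorm z, ← hs]
    ring
  have ha : 0 ≤ a := norm_nonneg _
  have hb : 0 ≤ b := norm_nonneg _
  have hr : 0 ≤ r := norm_nonneg _
  have hr2 : r^2 = a^2 + b^2 - 2*s := by
    rw [hr', ha', hb', hs']
    linarith [norm_sub_sq_real z x, real_inner_comm z x]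
  have hsab : s ≤ a * b := real_inner_le_norm x z
  have hsab' : -(a*b) ≤ s := by
    have := abs_real_inner_le_norm x z
    linarith [neg_abs_le s]
  have htri : a ≤ b + r := by
    calc a = ‖z - (z - x)‖ := by rw [ha']; congr 1; abel
    _ ≤ b + r := norm_sub_le _ _
  rcases eq_or_lt_of_le hb with hb0 | hbpos
  · -- b = 0 : z = 0, and r ≤ δ*0 = 0 forces x = z
    have hr0 : r = 0 := by
      have : r ≤ 0 := by rw [← hb0, mul_zero] at hhz; exact hhz
      linarith
    have hxz : x = z := by
      have h0 : z - x = 0 := norm_eq_zero.mp (hr'.symm.trans hr0)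
      have := sub_eq_zero.mp h0
      exact this.symm
    have hsum0 : ∑ i, ∑ j, (x i * x j - z i * z j) ^ 2 = 0 := by
      simp [hxz]
    constructor
    · rw [hr0, hsum0]
      simp
    · rw [hr0, hsum0]
      simp
  · have hδ0 : 0 ≤ δ := by
      by_contra h
      push_neg at h
      nlinarith
    have hrδb : r ≤ δ * b := hhz
    have hrsq : r^2 ≤ δ^2 * b^2 := by nlinarith
    constructor
    · -- lower bound
      have hkey : (2 - 4*δ) * r^2 * b^2 ≤ a^4 + b^4 - 2*s^2 := by
        nlinarith [sq_nonneg (a^2 - b^2 + r^2), sq_nonneg r, sq_nonneg b,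
          mul_le_mul_of_nonneg_right hrsq (sq_nonneg r),
          mul_nonneg (mul_nonneg hδ0 (sq_nonneg r)) (sq_nonneg b)]
      rw [hsum]
      have h1 : Real.sqrt (2 - 4*δ) * r * b = Real.sqrt ((2 - 4*δ) * r^2 * b^2) := by
        rw [show (2-4*δ)*r^2*b^2 = (2-4*δ)*(r*b)^2 by ring,
          Real.sqrt_mul (by linarith), Real.sqrt_sq (mul_nonneg hr hb)]
        ring
      rw [h1]
      exact Real.sqrt_le_sqrt hkey
    · -- upper bound
      have hkey : a^4 + b^4 - 2*s^2 ≤ ((2 + δ) * r * b)^2 := by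
        nlinarith [sq_nonneg (a - b), sq_nonneg (a + b), mul_nonneg hr hb,
          mul_nonneg (mul_nonneg hr hr) hb, mul_nonneg ha hb,
          mul_le_mul_of_nonneg_left hrδb hr, sq_nonneg (a*b - s), sq_nonneg (a*b + s)]
      rw [hsum]
      calc Real.sqrt (a^4 + b^4 - 2*s^2) ≤ Real.sqrt (((2 + δ) * r * b)^2) :=
            Real.sqrt_le_sqrt hkey
        _ = (2 + δ) * r * b := Real.sqrt_sq (by positivity)
end

section
/- For every t ∈ [0,1], the function f(t) := (2/π)·(2√t + (1-t)·(π/2 - 2·arctan(√t))) satisfies f(t)/√(1+t²) ≥ 0.9. -/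
/-- Taylor lower bound for arctan: for `0 ≤ y`, `y - y³/3 + y⁵/5 - y⁷/7 ≤ arctan y`. -/
lemma arctan_taylor_lb (y : ℝ) (hy : 0 ≤ y) :
    y - y^3/3 + y^5/5 - y^7/7 ≤ Real.arctan y := by
  have key : ∀ x : ℝ, HasDerivAt (fun z => Real.arctan z - (z - z^3/3 + z^5/5 - z^7/7))
      (x^8/(1+x^2)) x := by
    intro x
    have h1 := Real.hasDerivAt_arctan x
    have h2 : HasDerivAt (fun z : ℝ => z - z^3/3 + z^5/5 - z^7/7)
        ((1:ℝ) - ((3:ℕ):ℝ)*x^2/3 + ((5:ℕ):ℝ)*x^4/5 - ((7:ℕ):ℝ)*x^6/7) x :=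
      (((hasDerivAt_id x).sub ((hasDerivAt_pow 3 x).div_const 3)).add
        ((hasDerivAt_pow 5 x).div_const 5)).sub ((hasDerivAt_pow 7 x).div_const 7)
    have h3 := h1.sub h2
    refine h3.congr_deriv ?_
    have hx : (1:ℝ) + x^2 ≠ 0 := by positivity
    push_cast
    field_simp
    ring
  have mono : MonotoneOn (fun z => Real.arctan z - (z - z^3/3 + z^5/5 - z^7/7)) (Set.Ici 0) := by
    apply monotoneOn_of_deriv_nonneg (convex_Ici 0)
    · exact (Real.continuous_arctan.sub (by continuity)).continuousOn
    · intro x _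
      exact ((key x).differentiableAt).differentiableWithinAt
    · intro x _
      rw [(key x).deriv]
      positivity
  have h0 := mono (Set.self_mem_Ici) (Set.mem_Ici.mpr hy) hy
  simp only [Real.arctan_zero] at h0
  norm_num at h0
  linarith

set_option maxHeartbeats 1000000 in
/-- For `t ∈ [0,1]`, `f(t) = (2/π)(2√t + (1-t)(π/2 - 2 arctan √t))` satisfies
`f(t)/√(1+t²) ≥ 0.9`. -/
theorem stmt_1 (t : ℝ) (ht : t ∈ Set.Icc (0 : ℝ) 1) :
    (2 / Real.pi) * (2 * Real.sqrt t + (1 - t) * (Real.pi / 2 - 2 * Real.arctan (Real.sqrt t)))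
      ≥ 0.9 * Real.sqrt (1 + t ^ 2) := by
  obtain ⟨ht0, ht1⟩ := ht
  set s := Real.sqrt t with hsdef
  have hs0 : 0 ≤ s := Real.sqrt_nonneg t
  have hs1 : s ≤ 1 := Real.sqrt_le_one.mpr ht1
  have hts : s^2 = t := Real.sq_sqrt ht0
  rw [← hts]
  have hv : (0:ℝ) < 1 + s := by linarith
  set y := (1-s)/(1+s) with hy
  have hy0 : 0 ≤ y := div_nonneg (by linarith) hv.le
  have hy1 : y ≤ 1 := by
    rw [hy, div_le_one hv]; linarith
  -- the identity: arctan s + arctan y = π/4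
  have hmul : s * y < 1 := by
    rw [hy, mul_div_assoc', div_lt_one hv]
    nlinarith
  have harc : Real.arctan s + Real.arctan y = Real.pi/4 := by
    rw [Real.arctan_add hmul]
    have hne : 1 - s*y ≠ 0 := by nlinarith
    have h1 : (s + y)/(1 - s*y) = 1 := by
      rw [div_eq_one_iff_eq hne, hy]
      field_simp
      ring
    rw [h1, Real.arctan_one]
  have hkey : Real.pi/2 - 2*Real.arctan s = 2*Real.arctan y := by linarith
  -- lower bound the arctan
  have hQ : y - y^3/3 + y^5/5 - y^7/7 ≤ Real.arctan y := arctan_taylor_lb y hy0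
  have hQ0 : 0 ≤ y - y^3/3 + y^5/5 - y^7/7 := by
    have h2 : y^2 ≤ 1 := pow_le_one₀ hy0 hy1
    have h6 : y^6 ≤ 1 := pow_le_one₀ hy0 hy1
    have h4 : (0:ℝ) ≤ y^4 := pow_nonneg hy0 4
    nlinarith [mul_nonneg hy0 (show (0:ℝ) ≤ 105-35*y^2+21*y^4-15*y^6 by nlinarith)]
  have h1s2 : (0:ℝ) ≤ 1 - s^2 := by nlinarith
  set B := 2*s + (1-s^2)*(2*(y - y^3/3 + y^5/5 - y^7/7)) with hBdef
  have hB0 : 0 ≤ B := by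
    have := mul_nonneg h1s2 hQ0
    rw [hBdef]; nlinarith
  set N := 105*s*(1+s)^6 + 105*(1-s)^2*(1+s)^6 - 35*(1-s)^4*(1+s)^4
      + 21*(1-s)^6*(1+s)^2 - 15*(1-s)^8 with hNdef
  have hBN : B * (105*(1+s)^6) = 2*N := by
    rw [hBdef, hy, hNdef]
    field_simp
    ring
  have hBval : B = 2*N/(105*(1+s)^6) := by
    rw [eq_div_iff (by positivity : (105*(1+s)^6 : ℝ) ≠ 0)]
    exact hBN
  -- the polynomial core: Bernstein certificate
  have hpoly : (1+(s^2)^2) * (893025*(3141593/1000000:ℝ)^2*(1+s)^12) ≤ 1600*N^2 := by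
    have h1s : (0:ℝ) ≤ 1 - s := by linarith
    have hident : 1600*N^2 - (1+(s^2)^2) * (893025*(3141593/1000000:ℝ)^2*(1+s)^12) =
        (17111783439800071/40000000000)*s^0*(1-s)^16 + (375142484078600497/10000000000)*s^1*(1-s)^15 + (12818272369483412993/20000000000)*s^2*(1-s)^14 + (53730359528891852611/10000000000)*s^3*(1-s)^13 + (564841198002576390791/20000000000)*s^4*(1-s)^12 + (255272374307061704803/2500000000)*s^5*(1-s)^11 + (26456780874052238269/100000000)*s^6*(1-s)^10 + (155343695453499691313/312500000)*s^7*(1-s)^9 + (839479227691245628193/1250000000)*s^8*(1-s)^8 + (49654791198368410089/78125000)*s^9*(1-s)^7 + (783852942702406248/1953125)*s^10*(1-s)^6 + (6051412624711916511/39062500)*s^11*(1-s)^5 + (2468103402006768057/78125000)*s^12*(1-s)^4 + (39893133807811431/9765625)*s^13*(1-s)^3 + (15610356707404473/9765625)*s^14*(1-s)^2 + (3964535036801136/9765625)*s^15*(1-s)^1 + (495566879600142/9765625)*s^16*(1-s)^0 := by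
      rw [hNdef]; ring
    have hterms : ∀ i j : ℕ, (0:ℝ) ≤ s^i*(1-s)^j := fun i j =>
      mul_nonneg (pow_nonneg hs0 i) (pow_nonneg h1s j)
    nlinarith [hident, hterms 0 16, hterms 1 15, hterms 2 14, hterms 3 13, hterms 4 12,
      hterms 5 11, hterms 6 10, hterms 7 9, hterms 8 8, hterms 9 7, hterms 10 6,
      hterms 11 5, hterms 12 4, hterms 13 3, hterms 14 2, hterms 15 1, hterms 16 0]
  -- from the polynomial bound to the sqrt bound
  have hsq : Real.sqrt (1+(s^2)^2) ≤ (2/(3141593/1000000:ℝ))*B/(9/10) := by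
    have hA0 : (0:ℝ) ≤ (2/(3141593/1000000:ℝ))*B/(9/10) := by positivity
    rw [show (2/(3141593/1000000:ℝ))*B/(9/10) =
        Real.sqrt (((2/(3141593/1000000:ℝ))*B/(9/10))^2) from (Real.sqrt_sq hA0).symm]
    apply Real.sqrt_le_sqrt
    rw [hBval]
    have hexp : ((2/(3141593/1000000:ℝ)) * (2*N/(105*(1+s)^6)) / (9/10))^2 =
        1600*N^2 / (893025*(3141593/1000000:ℝ)^2*(1+s)^12) := by
      have hne : ((1:ℝ)+s) ≠ 0 := hv.ne'
      field_simp
      ring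
    rw [hexp, le_div_iff₀ (by positivity)]
    linarith [hpoly]
  -- assemble
  have hpi : Real.pi < 3141593/1000000 := by
    have h := Real.pi_lt_d6
    norm_num at h ⊢
    linarith
  have hpi0 : (0:ℝ) < Real.pi := Real.pi_pos
  have step1 : (2/Real.pi) * (2*s + (1-s^2)*(Real.pi/2 - 2*Real.arctan s))
      = (2/Real.pi) * (2*s + (1-s^2)*(2*Real.arctan y)) := by rw [hkey]
  have step2 : (2/Real.pi) * (2*s + (1-s^2)*(2*Real.arctan y)) ≥ (2/Real.pi) * B := by
    have hle : B ≤ 2*s + (1-s^2)*(2*Real.arctan y) := by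
      rw [hBdef]
      nlinarith [mul_le_mul_of_nonneg_left hQ h1s2]
    have h2pi : (0:ℝ) ≤ 2/Real.pi := by positivity
    exact mul_le_mul_of_nonneg_left hle h2pi
  have step3 : (2/Real.pi) * B ≥ (2/(3141593/1000000:ℝ)) * B :=
    mul_le_mul_of_nonneg_right
      (div_le_div_of_nonneg_left (by norm_num) hpi0 hpi.le) hB0
  have step4 : (2/(3141593/1000000:ℝ)) * B ≥ 0.9 * Real.sqrt (1+(s^2)^2) := by
    have h9 := mul_le_mul_of_nonneg_left hsq (show (0:ℝ) ≤ 0.9 by norm_num)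
    have he : (0.9:ℝ)*((2/(3141593/1000000:ℝ))*B/(9/10)) = (2/(3141593/1000000:ℝ))*B := by
      rw [show (0.9:ℝ) = 9/10 by norm_num]
      ring
    linarith
  linarith [step1, step2, step3, step4]
end

section
/- Let z, x ∈ ℝⁿ, h = z - x, and suppose a ∈ ℝⁿ satisfies: |aᵀz| ≥ α·‖z‖ for some α > 0, and |(aᵀx)² - (aᵀz)²| ≤ γ·‖h‖·|aᵀz| with γ·‖h‖ ≤ α·‖z‖. Then either |aᵀh| ≤ γ‖h‖, or |aᵀh - 2aᵀz| ≤ γ‖h‖. -/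
lemma aux_18 (u v g : ℝ) (hg : 0 ≤ g) (hgv : g ≤ |v|)
    (hprod : |u| * |u - 2 * v| ≤ g * |v|) : |u| ≤ g ∨ |u - 2 * v| ≤ g := by
  by_contra hc
  push_neg at hc
  obtain ⟨h1, h2⟩ := hc
  have habs : |2 * v| - |u| ≤ |u - 2 * v| := by
    have := abs_sub_abs_le_abs_sub (2 * v) u
    rw [abs_sub_comm] at this
    linarith
  have h2v : |2 * v| = 2 * |v| := by rw [abs_mul]; simp
  rcases le_total |u| |v| with hle | hle
  · -- then |u - 2v| ≥ |v|
    nlinarith [abs_nonneg u, abs_nonneg (u - 2 * v), abs_nonneg v]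
  · nlinarith [abs_nonneg u, abs_nonneg (u - 2 * v), abs_nonneg v]

/-- Decoupling of the quadratic truncation event: if `|aᵀz| ≥ α‖z‖`,
`|(aᵀx)² - (aᵀz)²| ≤ γ‖h‖|aᵀz|` and `γ‖h‖ ≤ α‖z‖`, then `aᵀh` lies within `γ‖h‖`
of either `0` or `2aᵀz`, where `h = z - x`. -/
theorem stmt_18 (n : ℕ) (z x h a : EuclideanSpace ℝ (Fin n)) (α γ : ℝ)
    (hα : 0 < α) (hγ : 0 < γ) (hh : h = z - x)
    (haz : α * ‖z‖ ≤ |(inner ℝ a z : ℝ)|)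
    (hquad : |(inner ℝ a x : ℝ) ^ 2 - (inner ℝ a z : ℝ) ^ 2| ≤ γ * ‖h‖ * |(inner ℝ a z : ℝ)|)
    (hsmall : γ * ‖h‖ ≤ α * ‖z‖) :
    |(inner ℝ a h : ℝ)| ≤ γ * ‖h‖ ∨ |(inner ℝ a h : ℝ) - 2 * (inner ℝ a z : ℝ)| ≤ γ * ‖h‖ := by
  set u := (inner ℝ a h : ℝ) with hu
  set v := (inner ℝ a z : ℝ) with hv
  have hx : (inner ℝ a x : ℝ) = v - u := by
    rw [hu, hh, inner_sub_right]; ring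
  have hg : 0 ≤ γ * ‖h‖ := by positivity
  have hgv : γ * ‖h‖ ≤ |v| := le_trans hsmall haz
  have hprod : |u| * |u - 2 * v| ≤ γ * ‖h‖ * |v| := by
    have : |(inner ℝ a x : ℝ) ^ 2 - v ^ 2| = |u| * |u - 2 * v| := by
      rw [hx, ← abs_mul]; ring_nf
    rw [this] at hquad
    exact hquad
  exact aux_18 u v (γ * ‖h‖) hg hgv hprod
end
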